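/- Executing a sensing action a for fluent f in a consistency-preserving state (M,s) yields a successor (M',s') in which every partially observant agent commonly knows that the fully observant group knows whether f: (M',s') ⊨ C_P(C_F f ∨ C_F ¬f), where F and P are the fully and partially observant groups. -/
import Mathlib


/-- Belief formulae over a set of agents `A` and a set of fluents `F`:
propositional formulae extended with belief operators `B_i` (`bel`),
group knowledge `E_α` (`ebel`) and common knowledge `C_α` (`cbel`). -/
inductive BForm (A F : Type) : Type where
  | top  : BForm A F
  | atom : F → BForm A F
  | neg  : BForm A F → BForm A F
  | conj : BForm A F → BForm A F → BForm A F
  | disj : BForm A F → BForm A F → BForm A F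
  | bel  : A → BForm A F → BForm A F
  | ebel : Set A → BForm A F → BForm A F
  | cbel : Set A → BForm A F → BForm A F

/-- A Kripke structure: a valuation of fluents at each world and an
accessibility relation for each agent. -/
structure Kripke (A W F : Type) where
  val : W → F → Prop
  rel : A → W → W → Prop

/-- Iterated group operator: `Esat M α P k w` says `E_α^k P` holds at `w`. -/
def Esat {A W F : Type} (M : Kripke A W F) (α : Set A) (P : W → Prop) : ℕ → W → Prop
  | 0, w => P w
  | k + 1, w => ∀ i ∈ α, ∀ v, M.rel i w v → Esat M α P k v

/-- Kripke satisfaction of belief formulae.  Common knowledge `C_α φ` holds at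
`w` iff `E_α^k φ` holds at `w` for every `k ≥ 0`. -/
def sat {A W F : Type} (M : Kripke A W F) : W → BForm A F → Prop
  | _, .top => True
  | w, .atom f => M.val w f
  | w, .neg φ => ¬ sat M w φ
  | w, .conj φ ψ => sat M w φ ∧ sat M w ψ
  | w, .disj φ ψ => sat M w φ ∨ sat M w ψ
  | w, .bel i φ => ∀ v, M.rel i w v → sat M v φ
  | w, .ebel α φ => ∀ i ∈ α, ∀ v, M.rel i w v → sat M v φ
  | w, .cbel α φ => ∀ k : ℕ, Esat M α (fun v => sat M v φ) k w

/-- `M` is an S5 structure: each accessibility relation is an equivalence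
relation (reflexive, symmetric, transitive). -/
def S5 {A W F : Type} (M : Kripke A W F) : Prop := ∀ i, Equivalence (M.rel i)

/-- Reachability via finite paths over the union of all accessibility relations. -/
def reach {A W F : Type} (M : Kripke A W F) : W → W → Prop :=
  Relation.ReflTransGen (fun u v => ∃ i, M.rel i u v)

/-- Reachability via finite paths labeled by agents in `α` only. -/
def reachIn {A W F : Type} (M : Kripke A W F) (α : Set A) : W → W → Prop :=
  Relation.ReflTransGen (fun u v => ∃ i ∈ α, M.rel i u v)

/-- Two pointed Kripke structures are equivalent if they satisfy the same
belief formulae. -/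
def equivState {A W W' F : Type} (M : Kripke A W F) (s : W) (M' : Kripke A W' F) (s' : W') : Prop :=
  ∀ φ : BForm A F, sat M s φ ↔ sat M' s' φ

/-- Fluent (purely propositional) formulae: no modal operators. -/
def IsProp {A F : Type} : BForm A F → Prop
  | .top => True
  | .atom _ => True
  | .neg φ => IsProp φ
  | .conj φ ψ => IsProp φ ∧ IsProp ψ
  | .disj φ ψ => IsProp φ ∧ IsProp ψ
  | .bel _ _ => False
  | .ebel _ _ => False
  | .cbel _ _ => False

/-- The successor Kripke structure after a sensing action for fluent `f`.
It is built from a disjoint replica of `M` (the `Sum.inr` worlds, restricted to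
worlds where the precondition `exec` holds) glued onto the original `M`
(the `Sum.inl` worlds): in the replica only edges of fully (`Fo`) or partially
(`Po`) observant agents are kept, and `Fo`-edges additionally require the two
endpoints to agree on `f`; oblivious agents point from replica worlds back into
the original copy of `M`. -/
def senseSucc {A W F : Type} (M : Kripke A W F) (exec : W → Prop) (f : F)
    (Fo Po : Set A) : Kripke A (W ⊕ {u : W // exec u}) F where
  val x := match x with
    | Sum.inl u => M.val u
    | Sum.inr u => M.val u.1
  rel i x y := match x, y with
    | Sum.inl u, Sum.inl v => M.rel i u v
    | Sum.inr u, Sum.inr v =>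
        (i ∈ Fo ∧ M.rel i u.1 v.1 ∧ (M.val u.1 f ↔ M.val v.1 f)) ∨ (i ∈ Po ∧ M.rel i u.1 v.1)
    | Sum.inr u, Sum.inl v => i ∉ Fo ∧ i ∉ Po ∧ M.rel i u.1 v
    | Sum.inl _, Sum.inr _ => False

/-- After executing a sensing action for fluent `f` in a
consistency-preserving state, the partially observant group `Po` commonly
knows that the fully observant group `Fo` commonly knows whether `f`:
the successor satisfies `C_P (C_F f ∨ C_F ¬f)`. -/
theorem stmt18 {A W F : Type} (M : Kripke A W F) (s : W)
    (exec : W → Prop) (f : F) (Fo Po : Set A)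
    (hdisj : Disjoint Fo Po) (hs : exec s)
    (hcp : ∀ u : W, ∀ i ∈ Fo ∪ Po,
      ¬ sat M u (.disj (.bel i (.atom f)) (.bel i (.neg (.atom f))))) :
    sat (senseSucc M exec f Fo Po) (Sum.inr ⟨s, hs⟩)
      (.cbel Po (.disj (.cbel Fo (.atom f)) (.cbel Fo (.neg (.atom f))))) := by
  set M' := senseSucc M exec f Fo Po with hM'
  -- Fo-steps from replica worlds stay in the replica and preserve f
  have hA : ∀ k : ℕ, ∀ u : {u : W // exec u}, M.val u.1 f →
      Esat M' Fo (fun v => sat M' v (.atom f)) k (Sum.inr u) := by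
    intro k
    induction k with
    | zero => intro u hu; exact hu
    | succ k ih =>
      intro u hu i hi v hv
      match v with
      | Sum.inl v =>
        exact absurd hi hv.1
      | Sum.inr v =>
        rcases hv with ⟨_, _, hiff⟩ | ⟨hip, _⟩
        · exact ih v (hiff.mp hu)
        · exact absurd rfl (hdisj.ne_of_mem hi hip)
  have hB : ∀ k : ℕ, ∀ u : {u : W // exec u}, ¬ M.val u.1 f →
      Esat M' Fo (fun v => sat M' v (.neg (.atom f))) k (Sum.inr u) := by
    intro k
    induction k with
    | zero => intro u hu; exact hu
    | succ k ih =>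
      intro u hu i hi v hv
      match v with
      | Sum.inl v =>
        exact absurd hi hv.1
      | Sum.inr v =>
        rcases hv with ⟨_, _, hiff⟩ | ⟨hip, _⟩
        · exact ih v (fun h => hu (hiff.mpr h))
        · exact absurd rfl (hdisj.ne_of_mem hi hip)
  have hgoal : ∀ u : {u : W // exec u},
      sat M' (Sum.inr u) (.disj (.cbel Fo (.atom f)) (.cbel Fo (.neg (.atom f)))) := by
    intro u
    by_cases h : M.val u.1 f
    · exact Or.inl (fun k => hA k u h)
    · exact Or.inr (fun k => hB k u h)
  intro k
  induction k generalizing s hs with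
  | zero => exact hgoal ⟨s, hs⟩
  | succ k ih =>
    intro i hi v hv
    match v with
    | Sum.inl v =>
      exact absurd hi hv.2.1
    | Sum.inr v =>
      exact ih v.1 v.2
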